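/- Let A be an n×n irreducible nonnegative real matrix (n ≥ 2) with entries a_{i,j}, and let x ∈ ℝ^n have all entries positive. Suppose x is not a Perron vector of A, and suppose there exist indices i_0, j_0 ∈ {1,…,n} such that (Ax)_{j_0}/x_{j_0} < max_{1≤i≤n} (A²x)_i/(Ax)_i = (A²x)_{i_0}/(Ax)_{i_0} and a_{i_0,j_0} ≠ 0. Then max_{1≤i≤n} (A²x)_i/(Ax)_i < max_{1≤i≤n} (Ax)_i/x_i. -/

import Mathlib

open Matrix

/-- A square matrix is irreducible if no permutation similarity puts it in block
upper triangular form; equivalently, for every nonempty proper subset `S` of indices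
there are `i ∈ S` and `j ∉ S` with `A i j ≠ 0`. -/
def IsIrreducibleMatrix {n : ℕ} (A : Matrix (Fin n) (Fin n) ℝ) : Prop :=
  ∀ S : Finset (Fin n), S.Nonempty → S ≠ Finset.univ → ∃ i ∈ S, ∃ j, j ∉ S ∧ A i j ≠ 0

/-- The Perron value (spectral radius) of a real square matrix: the supremum of the
absolute values of its complex eigenvalues (roots of the characteristic polynomial). -/
noncomputable def perronValue {n : ℕ} (A : Matrix (Fin n) (Fin n) ℝ) : ℝ :=
  sSup {r : ℝ | ∃ μ : ℂ, ((A.map Complex.ofReal).charpoly).IsRoot μ ∧ r = ‖μ‖}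

/-- A Perron vector of `A`: an eigenvector associated with the Perron value of `A`. -/
def IsPerronVector {n : ℕ} (A : Matrix (Fin n) (Fin n) ℝ) (x : Fin n → ℝ) : Prop :=
  x ≠ 0 ∧ A.mulVec x = perronValue A • x

/-- Let `A` be `n × n` (`n ≥ 2`) irreducible and nonnegative, `x` entrywise
positive and not a Perron vector of `A`. Suppose there are indices `i₀, j₀` with
`(Ax)_{j₀}/x_{j₀} < max_i (A²x)_i/(Ax)_i = (A²x)_{i₀}/(Ax)_{i₀}` and `A i₀ j₀ ≠ 0`.
Then `max_i (A²x)_i/(Ax)_i < max_i (Ax)_i/x_i`. -/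
theorem max_ratio_strict_decrease_case2 {n : ℕ} (hn : 2 ≤ n)
    (A : Matrix (Fin n) (Fin n) ℝ) (x : Fin n → ℝ)
    (hirr : IsIrreducibleMatrix A) (hnonneg : ∀ i j, 0 ≤ A i j) (hx : ∀ i, 0 < x i)
    (hnp : ¬ IsPerronVector A x)
    (i₀ j₀ : Fin n)
    (h₁ : A.mulVec x j₀ / x j₀ < ⨆ i, A.mulVec (A.mulVec x) i / A.mulVec x i)
    (h₂ : (⨆ i, A.mulVec (A.mulVec x) i / A.mulVec x i)
            = A.mulVec (A.mulVec x) i₀ / A.mulVec x i₀)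
    (h₃ : A i₀ j₀ ≠ 0) :
    (⨆ i, A.mulVec (A.mulVec x) i / A.mulVec x i) < ⨆ i, A.mulVec x i / x i := by
  haveI : Nontrivial (Fin n) := Fin.nontrivial_iff_two_le.mpr hn
  set y := A.mulVec x with hy_def
  set z := A.mulVec y with hz_def
  -- positivity of y
  have hy : ∀ i, 0 < y i := by
    intro i
    obtain ⟨i', hi', j, hj, hAij⟩ := hirr {i} ⟨i, Finset.mem_singleton_self i⟩ (by
      intro h
      obtain ⟨k, hk⟩ := exists_ne i
      have : k ∈ ({i} : Finset (Fin n)) := h ▸ Finset.mem_univ k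
      exact hk (Finset.mem_singleton.mp this))
    rw [Finset.mem_singleton] at hi'
    rw [← hi']
    have hpos : 0 < A i' j * x j :=
      mul_pos (lt_of_le_of_ne (hnonneg i' j) (Ne.symm hAij)) (hx j)
    have : A i' j * x j ≤ y i' := by
      simpa [hy_def, Matrix.mulVec, dotProduct] using
        Finset.single_le_sum (f := fun k => A i' k * x k)
          (fun k _ => mul_nonneg (hnonneg i' k) (hx k).le) (Finset.mem_univ j)
    linarith
  set R := ⨆ i, y i / x i with hR_def
  have hbdd : BddAbove (Set.range fun i => y i / x i) :=
    Set.Finite.bddAbove (Set.finite_range _)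
  have hR : ∀ i, y i ≤ R * x i := by
    intro i
    have := le_ciSup hbdd i
    rw [div_le_iff₀ (hx i)] at this
    linarith [this]
  -- M ≤ R
  have hzR : ∀ i, z i ≤ R * y i := by
    intro i
    have : z i ≤ ∑ j, A i j * (R * x j) := by
      simp only [hz_def, Matrix.mulVec, dotProduct]
      exact Finset.sum_le_sum fun j _ => mul_le_mul_of_nonneg_left (hR j) (hnonneg i j)
    calc z i ≤ ∑ j, A i j * (R * x j) := this
      _ = R * ∑ j, A i j * x j := by rw [Finset.mul_sum]; congr 1; ext j; ring
      _ = R * y i := by simp [hy_def, Matrix.mulVec, dotProduct]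
  have hMR : (⨆ i, z i / y i) ≤ R := by
    apply ciSup_le
    intro i
    rw [div_le_iff₀ (hy i)]
    linarith [hzR i]
  -- strict bound at j₀
  have hj₀ : y j₀ < R * x j₀ := by
    have := lt_of_lt_of_le h₁ hMR
    rw [div_lt_iff₀ (hx j₀)] at this
    linarith
  -- strict bound at i₀
  have hzi₀ : z i₀ < R * y i₀ := by
    have hsum : ∑ j, A i₀ j * y j < ∑ j, A i₀ j * (R * x j) := by
      apply Finset.sum_lt_sum
      · intro j _
        exact mul_le_mul_of_nonneg_left (hR j) (hnonneg i₀ j)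
      · exact ⟨j₀, Finset.mem_univ j₀, by
          have hApos : 0 < A i₀ j₀ := lt_of_le_of_ne (hnonneg i₀ j₀) (Ne.symm h₃)
          exact mul_lt_mul_of_pos_left hj₀ hApos⟩
    calc z i₀ = ∑ j, A i₀ j * y j := by simp [hz_def, Matrix.mulVec, dotProduct]
      _ < ∑ j, A i₀ j * (R * x j) := hsum
      _ = R * ∑ j, A i₀ j * x j := by rw [Finset.mul_sum]; congr 1; ext j; ring
      _ = R * y i₀ := by simp [hy_def, Matrix.mulVec, dotProduct]
  rw [h₂]
  rw [div_lt_iff₀ (hy i₀)]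
  linarith
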